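/- For each n ∈ ℕ with n ≥ 1, the set Sₙ* = ⋃_{k=1}^{n} (k/(n+1), k/n) is an open additive subset of (0,1]: if a, b ∈ Sₙ* and a + b ≤ 1, then a + b ∈ Sₙ*. -/

import Mathlib

theorem stmt12 (n : ℕ) (hn : 1 ≤ n) :
    IsOpen (⋃ k ∈ Finset.Icc 1 n, Set.Ioo ((k:ℝ)/(n+1)) ((k:ℝ)/n)) ∧
    (⋃ k ∈ Finset.Icc 1 n, Set.Ioo ((k:ℝ)/(n+1)) ((k:ℝ)/n)) ⊆ Set.Ioc (0:ℝ) 1 ∧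
    ∀ a b : ℝ, a ∈ (⋃ k ∈ Finset.Icc 1 n, Set.Ioo ((k:ℝ)/(n+1)) ((k:ℝ)/n)) →
      b ∈ (⋃ k ∈ Finset.Icc 1 n, Set.Ioo ((k:ℝ)/(n+1)) ((k:ℝ)/n)) → a + b ≤ 1 →
      a + b ∈ (⋃ k ∈ Finset.Icc 1 n, Set.Ioo ((k:ℝ)/(n+1)) ((k:ℝ)/n)) := by
  have hn0 : (0:ℝ) < n := by exact_mod_cast hn
  have hn1 : (0:ℝ) < n + 1 := by linarith
  refine ⟨isOpen_biUnion fun k _ => isOpen_Ioo, ?_, ?_⟩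
  · intro x hx
    simp only [Set.mem_iUnion, Finset.mem_Icc] at hx
    obtain ⟨k, ⟨hk1, hkn⟩, hx1, hx2⟩ := hx
    have hk1' : (1:ℝ) ≤ k := by exact_mod_cast hk1
    have hkn' : (k:ℝ) ≤ n := by exact_mod_cast hkn
    constructor
    · have : (0:ℝ) < (k:ℝ)/(n+1) := by positivity
      linarith
    · have : (k:ℝ)/n ≤ 1 := by
        rw [div_le_one hn0]; exact hkn'
      linarith
  · intro a b ha hb hab
    simp only [Set.mem_iUnion, Finset.mem_Icc] at ha hb ⊢
    obtain ⟨j, ⟨hj1, hjn⟩, ha1, ha2⟩ := ha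
    obtain ⟨k, ⟨hk1, hkn⟩, hb1, hb2⟩ := hb
    refine ⟨j + k, ⟨?_, ?_⟩, ?_, ?_⟩
    · omega
    · -- j + k ≤ n since a + b ≤ 1 and a + b > (j+k)/(n+1)
      by_contra h
      have h' : n + 1 ≤ j + k := by omega
      have : (n:ℝ) + 1 ≤ (j:ℝ) + k := by exact_mod_cast h'
      have h1 : (1:ℝ) ≤ ((j:ℝ)+k)/(n+1) := by
        rw [le_div_iff₀ hn1]; linarith
      have h2 := add_lt_add ha1 hb1
      rw [← add_div] at h2
      linarith
    · push_cast
      have := add_lt_add ha1 hb1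
      rw [← add_div] at this
      push_cast at this
      linarith
    · push_cast
      have := add_lt_add ha2 hb2
      rw [← add_div] at this
      push_cast at this
      linarith
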